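/- Threshold-exceedance bound for generalized random coding with per-codeword input distributions (from the proof of Lemma 1, single-transmitter form). Let Q̃ be a probability distribution on 𝒳, let F be a nonempty finite index set with a probability distribution P_w on 𝒳 for each w ∈ F, let N ≥ 1, and let τ : 𝒴^N → ℝ be any function. Let X̃ and (X_w)_{w∈F} be mutually independent random vectors in 𝒳^N with i.i.d. components: the components of X̃ distributed as Q̃ and the components of X_w distributed as P_w. Conditionally on them, let Y ∈ 𝒴^N have distribution W^N(·|X̃). Then for every ρ ∈ (0,1] and s₂ > 0: Pr{ ∃ w ∈ F : W^N(Y|X_w) > e^{−N τ(Y)} } ≤ |F|^ρ · Σ_{y∈𝒴^N} ( ∏_{j=1}^N Σ_{x∈𝒳} Q̃(x) W(y_j|x) ) · ( max_{w∈F} ∏_{j=1}^N Σ_{x∈𝒳} P_w(x) W(y_j|x)^{s₂/ρ} )^ρ · e^{N s₂ τ(y)}. -/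

import Mathlib

open scoped BigOperators Classical

noncomputable section

/-- `W` is a discrete memoryless channel from `𝓧` to `𝓨`. -/
def IsDMC {𝓧 𝓨 : Type*} [Fintype 𝓨] (W : 𝓧 → 𝓨 → ℝ) : Prop :=
  (∀ x y, 0 ≤ W x y) ∧ ∀ x, ∑ y, W x y = 1

/-- `P` is a probability distribution on `𝓧`. -/
def IsDist {𝓧 : Type*} [Fintype 𝓧] (P : 𝓧 → ℝ) : Prop :=
  (∀ x, 0 ≤ P x) ∧ ∑ x, P x = 1

/-- The `N`-fold memoryless extension `W^N(y|x)`. -/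
def Wn {𝓧 𝓨 : Type*} (W : 𝓧 → 𝓨 → ℝ) {N : ℕ} (x : Fin N → 𝓧) (y : Fin N → 𝓨) : ℝ :=
  ∏ j, W (x j) (y j)

/-- Sum over a function space of a product equals the product of sums. -/
lemma sum_fun_prod {ι κ : Type*} [Fintype ι] [DecidableEq ι] [Fintype κ] (g : ι → κ → ℝ) :
    ∑ f : ι → κ, ∏ i, g i (f i) = ∏ i, ∑ k, g i k := by
  classical
  exact (Fintype.prod_sum (fun i k => g i k)).symm

/-- Threshold-exceedance bound for generalized random coding with
per-codeword input distributions (from the proof of Lemma 1, single-transmitter form). -/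
theorem stmt11 {𝓧 𝓨 : Type*} [Fintype 𝓧] [Fintype 𝓨] [Nonempty 𝓧] [Nonempty 𝓨]
    {F : Type*} [Fintype F] [Nonempty F]
    (W : 𝓧 → 𝓨 → ℝ) (hW : IsDMC W)
    (Qt : 𝓧 → ℝ) (hQt : IsDist Qt) (P : F → 𝓧 → ℝ) (hP : ∀ w, IsDist (P w))
    (N : ℕ) (hN : 1 ≤ N) (τ : (Fin N → 𝓨) → ℝ)
    (ρ s₂ : ℝ) (hρ : ρ ∈ Set.Ioc (0:ℝ) 1) (hs₂ : 0 < s₂) :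
    (∑ xt : Fin N → 𝓧, ∑ xw : F → Fin N → 𝓧, ∑ y : Fin N → 𝓨,
        (∏ j, Qt (xt j)) * (∏ w, ∏ j, P w (xw w j)) * Wn W xt y *
          (if ∃ w, Real.exp (-((N : ℝ) * τ y)) < Wn W (xw w) y then (1:ℝ) else 0))
      ≤ (Fintype.card F : ℝ) ^ ρ *
          ∑ y : Fin N → 𝓨,
            (∏ j, ∑ x : 𝓧, Qt x * W x (y j)) *
              (⨆ w : F, ∏ j, ∑ x : 𝓧, P w x * W x (y j) ^ (s₂ / ρ)) ^ ρ *
                Real.exp ((N : ℝ) * s₂ * τ y) := by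
  classical
  obtain ⟨hρ0, hρ1⟩ := hρ
  obtain ⟨hW0, hW1⟩ := hW
  obtain ⟨hQ0, hQ1⟩ := hQt
  set r : ℝ := s₂ / ρ with hrdef
  have hr0 : 0 < r := div_pos hs₂ hρ0
  set D : F → (Fin N → 𝓨) → ℝ := fun w y => ∏ j, ∑ x : 𝓧, P w x * W x (y j) ^ r with hD
  have hDnn : ∀ w y, 0 ≤ D w y := fun w y =>
    Finset.prod_nonneg fun j _ => Finset.sum_nonneg fun x _ =>
      mul_nonneg ((hP w).1 x) (Real.rpow_nonneg (hW0 x (y j)) r)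
  have hWnnn : ∀ (x : Fin N → 𝓧) (y : Fin N → 𝓨), 0 ≤ Wn W x y := fun x y =>
    Finset.prod_nonneg fun j _ => hW0 _ _
  have hbdd : ∀ y : Fin N → 𝓨, BddAbove (Set.range fun w => D w y) := fun y =>
    Set.Finite.bddAbove (Set.finite_range _)
  have hsup_le : ∀ (y) (w), D w y ≤ ⨆ w, D w y := fun y w => le_ciSup (hbdd y) w
  have hsupnn : ∀ y, 0 ≤ ⨆ w, D w y := fun y =>
    le_trans (hDnn (Classical.arbitrary F) y) (hsup_le y _)
  -- each product distribution sums to one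
  have hPsum : ∀ w : F, ∑ x : Fin N → 𝓧, ∏ j, P w (x j) = 1 := by
    intro w
    rw [sum_fun_prod (fun (_ : Fin N) (x : 𝓧) => P w x)]
    simp [(hP w).2]
  have hPPsum : ∑ xw : F → Fin N → 𝓧, ∏ w, ∏ j, P w (xw w j) = 1 := by
    rw [sum_fun_prod (fun (w : F) (x : Fin N → 𝓧) => ∏ j, P w (x j))]
    simp [hPsum]
  have hPPnn : ∀ xw : F → Fin N → 𝓧, 0 ≤ ∏ w, ∏ j, P w (xw w j) := fun xw =>
    Finset.prod_nonneg fun w _ => Finset.prod_nonneg fun j _ => (hP w).1 _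
  -- marginalization over the product distribution of a function of coordinate `w`
  have hmarg : ∀ (w : F) (f : (Fin N → 𝓧) → ℝ),
      ∑ xw : F → Fin N → 𝓧, (∏ w', ∏ j, P w' (xw w' j)) * f (xw w)
        = ∑ x : Fin N → 𝓧, (∏ j, P w (x j)) * f x := by
    intro w f
    have key : ∀ xw : F → Fin N → 𝓧,
        (∏ w', ∏ j, P w' (xw w' j)) * f (xw w)
          = ∏ w', ((∏ j, P w' (xw w' j)) * (if w' = w then f (xw w') else 1)) := by
      intro xw
      rw [Finset.prod_mul_distrib]
      congr 1
      simp
    calc ∑ xw : F → Fin N → 𝓧, (∏ w', ∏ j, P w' (xw w' j)) * f (xw w)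
        = ∑ xw : F → Fin N → 𝓧,
            ∏ w', ((∏ j, P w' (xw w' j)) * (if w' = w then f (xw w') else 1)) := by
          exact Finset.sum_congr rfl fun xw _ => key xw
      _ = ∏ w', ∑ x : Fin N → 𝓧, (∏ j, P w' (x j)) * (if w' = w then f x else 1) :=
          sum_fun_prod (fun (w' : F) (x : Fin N → 𝓧) =>
            (∏ j, P w' (x j)) * (if w' = w then f x else 1))
      _ = ∑ x : Fin N → 𝓧, (∏ j, P w (x j)) * f x := by
          rw [Fintype.prod_eq_single w]
          · simp
          · intro w' hw'
            simp [hw', hPsum w']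
  -- per-letter marginalization
  have hQy : ∀ y : Fin N → 𝓨,
      ∑ xt : Fin N → 𝓧, (∏ j, Qt (xt j)) * Wn W xt y
        = ∏ j, ∑ x : 𝓧, Qt x * W x (y j) := by
    intro y
    have : ∀ xt : Fin N → 𝓧, (∏ j, Qt (xt j)) * Wn W xt y
        = ∏ j, Qt (xt j) * W (xt j) (y j) := by
      intro xt; rw [Wn, ← Finset.prod_mul_distrib]
    simp_rw [this]
    exact sum_fun_prod (fun j x => Qt x * W x (y j))
  have hDy : ∀ (w : F) (y : Fin N → 𝓨),
      ∑ x : Fin N → 𝓧, (∏ j, P w (x j)) * (Wn W x y) ^ r = D w y := by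
    intro w y
    have : ∀ x : Fin N → 𝓧, (∏ j, P w (x j)) * (Wn W x y) ^ r
        = ∏ j, P w (x j) * W (x j) (y j) ^ r := by
      intro x
      rw [Wn, ← Real.finset_prod_rpow _ _ (fun j _ => hW0 _ _) r, ← Finset.prod_mul_distrib]
    simp_rw [this]
    exact sum_fun_prod (fun j x => P w x * W x (y j) ^ r)
  -- the core per-`y` bound on the codeword average
  have hcore : ∀ y : Fin N → 𝓨,
      (∑ xw : F → Fin N → 𝓧, (∏ w, ∏ j, P w (xw w j)) *
          (if ∃ w, Real.exp (-((N : ℝ) * τ y)) < Wn W (xw w) y then (1:ℝ) else 0))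
        ≤ (Fintype.card F : ℝ) ^ ρ * (⨆ w, D w y) ^ ρ * Real.exp ((N : ℝ) * s₂ * τ y) := by
    intro y
    set S : (F → Fin N → 𝓧) → ℝ :=
      fun xw => ∑ w, (Wn W (xw w) y * Real.exp ((N : ℝ) * τ y)) ^ r with hS
    have hSnn : ∀ xw, 0 ≤ S xw := fun xw =>
      Finset.sum_nonneg fun w _ => Real.rpow_nonneg
        (mul_nonneg (hWnnn _ _) (Real.exp_pos _).le) r
    -- indicator bound
    have hind : ∀ xw : F → Fin N → 𝓧,
        (if ∃ w, Real.exp (-((N : ℝ) * τ y)) < Wn W (xw w) y then (1:ℝ) else 0)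
          ≤ S xw ^ ρ := by
      intro xw
      split_ifs with h
      · obtain ⟨w, hw⟩ := h
        have hA : 1 ≤ Wn W (xw w) y * Real.exp ((N : ℝ) * τ y) := by
          have := mul_lt_mul_of_pos_right hw (Real.exp_pos ((N : ℝ) * τ y))
          rw [← Real.exp_add, neg_add_cancel, Real.exp_zero] at this
          exact this.le
        have h1 : 1 ≤ (Wn W (xw w) y * Real.exp ((N : ℝ) * τ y)) ^ r := by
          calc (1:ℝ) = 1 ^ r := (Real.one_rpow r).symm
          _ ≤ _ := Real.rpow_le_rpow zero_le_one hA hr0.le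
        have h2 : 1 ≤ S xw := le_trans h1 (Finset.single_le_sum
          (fun w _ => Real.rpow_nonneg
            (mul_nonneg (hWnnn _ _) (Real.exp_pos _).le) r) (Finset.mem_univ w))
        calc (1:ℝ) = 1 ^ ρ := (Real.one_rpow ρ).symm
        _ ≤ S xw ^ ρ := Real.rpow_le_rpow zero_le_one h2 hρ0.le
      · exact Real.rpow_nonneg (hSnn xw) ρ
    -- Jensen (concavity of x ↦ x ^ ρ)
    have hjensen : ∑ xw : F → Fin N → 𝓧, (∏ w, ∏ j, P w (xw w j)) * S xw ^ ρ
        ≤ (∑ xw : F → Fin N → 𝓧, (∏ w, ∏ j, P w (xw w j)) * S xw) ^ ρ := by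
      have hp : (1:ℝ) ≤ 1 / ρ := by rw [le_div_iff₀ hρ0]; linarith
      have := Real.arith_mean_le_rpow_mean Finset.univ
        (fun xw : F → Fin N → 𝓧 => ∏ w, ∏ j, P w (xw w j))
        (fun xw => S xw ^ ρ) (fun xw _ => hPPnn xw) hPPsum
        (fun xw _ => Real.rpow_nonneg (hSnn xw) ρ) hp
      have hz : ∀ xw : F → Fin N → 𝓧, (S xw ^ ρ) ^ (1 / ρ) = S xw := by
        intro xw
        rw [← Real.rpow_mul (hSnn xw), mul_one_div, div_self hρ0.ne', Real.rpow_one]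
      calc ∑ xw : F → Fin N → 𝓧, (∏ w, ∏ j, P w (xw w j)) * S xw ^ ρ
          ≤ (∑ xw : F → Fin N → 𝓧, (∏ w, ∏ j, P w (xw w j)) * (S xw ^ ρ) ^ (1/ρ)) ^ (1/(1/ρ)) :=
            this
        _ = (∑ xw : F → Fin N → 𝓧, (∏ w, ∏ j, P w (xw w j)) * S xw) ^ ρ := by
            rw [one_div_one_div]
            congr 1
            exact Finset.sum_congr rfl fun xw _ => by rw [hz xw]
    -- compute the mean of S
    have hmean : ∑ xw : F → Fin N → 𝓧, (∏ w, ∏ j, P w (xw w j)) * S xw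
        = ∑ w, D w y * Real.exp ((N : ℝ) * τ y * r) := by
      simp_rw [hS, Finset.mul_sum]
      rw [Finset.sum_comm]
      refine Finset.sum_congr rfl fun w _ => ?_
      have : ∀ xw : F → Fin N → 𝓧,
          (∏ w', ∏ j, P w' (xw w' j)) * (Wn W (xw w) y * Real.exp ((N : ℝ) * τ y)) ^ r
            = (∏ w', ∏ j, P w' (xw w' j)) *
                ((Wn W (xw w) y) ^ r * Real.exp ((N : ℝ) * τ y * r)) := by
        intro xw
        rw [Real.mul_rpow (hWnnn _ _) (Real.exp_pos _).le, ← Real.exp_mul]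
      simp_rw [this]
      have := hmarg w (fun x => (Wn W x y) ^ r * Real.exp ((N : ℝ) * τ y * r))
      simp only [← mul_assoc] at this ⊢
      rw [this, ← Finset.sum_mul]
      rw [hDy w y]
    -- sum over w ≤ card * sup
    have hsumD : ∑ w, D w y * Real.exp ((N : ℝ) * τ y * r)
        ≤ (Fintype.card F : ℝ) * (⨆ w, D w y) * Real.exp ((N : ℝ) * τ y * r) := by
      rw [← Finset.sum_mul]
      apply mul_le_mul_of_nonneg_right _ (Real.exp_pos _).le
      calc ∑ w, D w y ≤ ∑ _w : F, ⨆ w, D w y :=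
            Finset.sum_le_sum fun w _ => hsup_le y w
      _ = (Fintype.card F : ℝ) * (⨆ w, D w y) := by
            rw [Finset.sum_const, nsmul_eq_mul]; rfl
    -- put it together
    have hfinal : ((Fintype.card F : ℝ) * (⨆ w, D w y) * Real.exp ((N : ℝ) * τ y * r)) ^ ρ
        = (Fintype.card F : ℝ) ^ ρ * (⨆ w, D w y) ^ ρ * Real.exp ((N : ℝ) * s₂ * τ y) := by
      rw [Real.mul_rpow (mul_nonneg (Nat.cast_nonneg _) (hsupnn y)) (Real.exp_pos _).le,
        Real.mul_rpow (Nat.cast_nonneg _) (hsupnn y), ← Real.exp_mul]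
      congr 1
      rw [hrdef]
      field_simp
    calc (∑ xw : F → Fin N → 𝓧, (∏ w, ∏ j, P w (xw w j)) *
            (if ∃ w, Real.exp (-((N : ℝ) * τ y)) < Wn W (xw w) y then (1:ℝ) else 0))
        ≤ ∑ xw : F → Fin N → 𝓧, (∏ w, ∏ j, P w (xw w j)) * S xw ^ ρ :=
          Finset.sum_le_sum fun xw _ => mul_le_mul_of_nonneg_left (hind xw) (hPPnn xw)
      _ ≤ (∑ xw : F → Fin N → 𝓧, (∏ w, ∏ j, P w (xw w j)) * S xw) ^ ρ := hjensen
      _ = (∑ w, D w y * Real.exp ((N : ℝ) * τ y * r)) ^ ρ := by rw [hmean]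
      _ ≤ ((Fintype.card F : ℝ) * (⨆ w, D w y) * Real.exp ((N : ℝ) * τ y * r)) ^ ρ := by
          apply Real.rpow_le_rpow _ hsumD hρ0.le
          exact Finset.sum_nonneg fun w _ =>
            mul_nonneg (hDnn w y) (Real.exp_pos _).le
      _ = (Fintype.card F : ℝ) ^ ρ * (⨆ w, D w y) ^ ρ * Real.exp ((N : ℝ) * s₂ * τ y) :=
          hfinal
  -- rearrange the LHS and conclude
  have hswap : (∑ xt : Fin N → 𝓧, ∑ xw : F → Fin N → 𝓧, ∑ y : Fin N → 𝓨,
        (∏ j, Qt (xt j)) * (∏ w, ∏ j, P w (xw w j)) * Wn W xt y *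
          (if ∃ w, Real.exp (-((N : ℝ) * τ y)) < Wn W (xw w) y then (1:ℝ) else 0))
      = ∑ y : Fin N → 𝓨,
          (∑ xt : Fin N → 𝓧, (∏ j, Qt (xt j)) * Wn W xt y) *
            (∑ xw : F → Fin N → 𝓧, (∏ w, ∏ j, P w (xw w j)) *
              (if ∃ w, Real.exp (-((N : ℝ) * τ y)) < Wn W (xw w) y then (1:ℝ) else 0)) := by
    calc (∑ xt : Fin N → 𝓧, ∑ xw : F → Fin N → 𝓧, ∑ y : Fin N → 𝓨,
          (∏ j, Qt (xt j)) * (∏ w, ∏ j, P w (xw w j)) * Wn W xt y *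
            (if ∃ w, Real.exp (-((N : ℝ) * τ y)) < Wn W (xw w) y then (1:ℝ) else 0))
        = ∑ xt : Fin N → 𝓧, ∑ y : Fin N → 𝓨, ∑ xw : F → Fin N → 𝓧,
            (∏ j, Qt (xt j)) * (∏ w, ∏ j, P w (xw w j)) * Wn W xt y *
              (if ∃ w, Real.exp (-((N : ℝ) * τ y)) < Wn W (xw w) y then (1:ℝ) else 0) :=
          Finset.sum_congr rfl fun xt _ => Finset.sum_comm
      _ = ∑ y : Fin N → 𝓨, ∑ xt : Fin N → 𝓧, ∑ xw : F → Fin N → 𝓧,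
            (∏ j, Qt (xt j)) * (∏ w, ∏ j, P w (xw w j)) * Wn W xt y *
              (if ∃ w, Real.exp (-((N : ℝ) * τ y)) < Wn W (xw w) y then (1:ℝ) else 0) :=
          Finset.sum_comm
      _ = _ := by
          refine Finset.sum_congr rfl fun y _ => ?_
          rw [Finset.sum_mul_sum]
          exact Finset.sum_congr rfl fun xt _ => Finset.sum_congr rfl fun xw _ => by ring
  have hQynn : ∀ y : Fin N → 𝓨, 0 ≤ ∑ xt : Fin N → 𝓧, (∏ j, Qt (xt j)) * Wn W xt y :=
    fun y => Finset.sum_nonneg fun xt _ =>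
      mul_nonneg (Finset.prod_nonneg fun j _ => hQ0 _) (hWnnn _ _)
  simp only [hD] at hcore
  rw [hswap, Finset.mul_sum]
  refine Finset.sum_le_sum fun y _ => ?_
  calc (∑ xt : Fin N → 𝓧, (∏ j, Qt (xt j)) * Wn W xt y) *
        (∑ xw : F → Fin N → 𝓧, (∏ w, ∏ j, P w (xw w j)) *
          (if ∃ w, Real.exp (-((N : ℝ) * τ y)) < Wn W (xw w) y then (1:ℝ) else 0))
      ≤ (∑ xt : Fin N → 𝓧, (∏ j, Qt (xt j)) * Wn W xt y) *
          ((Fintype.card F : ℝ) ^ ρ *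
            (⨆ w : F, ∏ j, ∑ x : 𝓧, P w x * W x (y j) ^ r) ^ ρ *
              Real.exp ((N : ℝ) * s₂ * τ y)) :=
        mul_le_mul_of_nonneg_left (hcore y) (hQynn y)
    _ = (Fintype.card F : ℝ) ^ ρ *
          ((∏ j, ∑ x : 𝓧, Qt x * W x (y j)) *
            (⨆ w : F, ∏ j, ∑ x : 𝓧, P w x * W x (y j) ^ r) ^ ρ *
              Real.exp ((N : ℝ) * s₂ * τ y)) := by
        rw [hQy y]; ring
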